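/- arXiv:1907.09918 — 3 statements merged into one kernel-verified Lean document; each statement's English description precedes it below -/
import Mathlib

section
/- (Lemma 2, single branch.) Let K ≥ 2 be an integer, let α₁, α₂ ≥ 0, ρ > 0, ε > 0, and assume τ := α₁² − ε·α₂² > 0. Let X and Y be Exp(1)-distributed and Z be Gamma(K−1,1)-distributed real random variables, with X, Y, Z mutually independent. Then the probability that X·Y·α₁²/(X·Y·α₂² + X·Z + 1/ρ) < ε equals 1 − 2·√(ε/(ρτ))·K₁(2·√(ε/(ρτ))) / (1 + ε/τ)^{K−1}. -/
open MeasureTheory ProbabilityTheory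

/-- The modified Bessel function of the second kind, via its integral representation
`K_ν(x) = ∫₀^∞ exp(−x cosh t) cosh(ν t) dt`. -/
noncomputable def besselK (ν x : ℝ) : ℝ :=
  ∫ t in Set.Ioi (0 : ℝ), Real.exp (-x * Real.cosh t) * Real.cosh (ν * t)

open Real Set
open scoped ENNReal

lemma aux_exp_integrableOn {b : ℝ} (hb : 0 < b) :
    IntegrableOn (fun x => Real.exp (-(b/x) - x)) (Ioi (0:ℝ)) := by
  have hg : IntegrableOn (fun x => Real.exp (-x)) (Ioi (0:ℝ)) := by
    simpa using exp_neg_integrableOn_Ioi 0 one_pos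
  refine Integrable.mono' hg ?_ ?_
  · refine ContinuousOn.aestronglyMeasurable ?_ measurableSet_Ioi
    exact Real.continuous_exp.comp_continuousOn
      (((continuousOn_const.div continuousOn_id fun x hx => ne_of_gt hx).neg).sub continuousOn_id)
  · rw [ae_restrict_iff' measurableSet_Ioi]
    refine ae_of_all _ fun x hx => ?_
    rw [Real.norm_eq_abs, abs_of_pos (Real.exp_pos _), Real.exp_le_exp]
    have : 0 ≤ b / x := le_of_lt (div_pos hb hx)
    linarith

lemma besselK_identity {b : ℝ} (hb : 0 < b) :
    ∫ x in Ioi (0:ℝ), Real.exp (-(b/x) - x) =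
      2 * Real.sqrt b * besselK 1 (2 * Real.sqrt b) := by
  set σ := Real.sqrt b with hσdef
  have hσ : 0 < σ := Real.sqrt_pos.2 hb
  have hσ2 : σ ^ 2 = b := Real.sq_sqrt hb.le
  have himg : (fun u : ℝ => σ * Real.exp u) '' univ = Ioi 0 := by
    ext x
    simp only [image_univ, mem_range, mem_Ioi]
    constructor
    · rintro ⟨u, rfl⟩; positivity
    · intro hx
      exact ⟨Real.log (x/σ), by rw [Real.exp_log (by positivity)]; field_simp⟩
  have hderiv : ∀ u ∈ (univ : Set ℝ), HasDerivWithinAt (fun u => σ * Real.exp u)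
      (σ * Real.exp u) univ u :=
    fun u _ => ((Real.hasDerivAt_exp u).const_mul σ).hasDerivWithinAt
  have hinj : InjOn (fun u => σ * Real.exp u) univ :=
    fun u _ v _ h => Real.exp_injective (mul_left_cancel₀ hσ.ne' h)
  have hint_eq : ∀ u : ℝ, |σ * Real.exp u| • Real.exp (-(b/(σ * Real.exp u)) - σ * Real.exp u)
      = σ * Real.exp u * Real.exp (-(2*σ) * Real.cosh u) := by
    intro u
    have he : (0:ℝ) < Real.exp u := Real.exp_pos u
    have h1 : b / (σ * Real.exp u) = σ * Real.exp (-u) := by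
      rw [Real.exp_neg, ← hσ2]; field_simp
    have h2 : -(σ * Real.exp (-u)) - σ * Real.exp u = -(2*σ) * Real.cosh u := by
      rw [Real.cosh_eq]; ring
    rw [h1, smul_eq_mul, abs_of_pos (by positivity), h2]
  set h : ℝ → ℝ := fun u => σ * Real.exp u * Real.exp (-(2*σ) * Real.cosh u) with hhdef
  have key := integral_image_eq_integral_abs_deriv_smul MeasurableSet.univ hderiv hinj
    (fun x => Real.exp (-(b/x) - x))
  rw [himg, Measure.restrict_univ] at key
  have key2 : ∫ x in Ioi (0:ℝ), Real.exp (-(b/x) - x) = ∫ u, h u := by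
    rw [key]; exact integral_congr_ae (ae_of_all _ hint_eq)
  have hh_int : Integrable h := by
    have := (integrableOn_image_iff_integrableOn_abs_deriv_smul MeasurableSet.univ hderiv hinj
      (fun x => Real.exp (-(b/x) - x))).1 (by rw [himg]; exact aux_exp_integrableOn hb)
    rw [integrableOn_univ] at this
    exact this.congr (ae_of_all _ hint_eq)
  have hsplit : ∫ u, h u = (∫ u in Ioi (0:ℝ), h u) + ∫ u in Iic (0:ℝ), h u := by
    rw [← integral_add_compl measurableSet_Ioi hh_int, compl_Ioi]
  have hrefl : ∫ u in Iic (0:ℝ), h u = ∫ u in Ioi (0:ℝ), h (-u) := by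
    rw [integral_comp_neg_Ioi, neg_zero]
  have hcomb : (∫ u in Ioi (0:ℝ), h u) + ∫ u in Ioi (0:ℝ), h (-u)
      = ∫ u in Ioi (0:ℝ), (h u + h (-u)) := by
    rw [integral_add (hh_int.integrableOn) ((hh_int.comp_neg).integrableOn)]
  have hpt : ∀ u : ℝ, h u + h (-u)
      = (2*σ) * (Real.exp (-(2*σ) * Real.cosh u) * Real.cosh (1 * u)) := by
    intro u
    simp only [hhdef, Real.cosh_neg, one_mul]
    rw [Real.cosh_eq]
    ring
  rw [key2, hsplit, hrefl, hcomb, integral_congr_ae (ae_of_all _ hpt), integral_const_mul]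
  rw [besselK]

lemma gamma_laplace {a s : ℝ} (ha : 0 < a) (hs : 0 ≤ s) :
    ∫⁻ z, ENNReal.ofReal (Real.exp (-(s * z))) ∂(gammaMeasure a 1)
      = ENNReal.ofReal ((1+s) ^ (-a)) := by
  have h1s : (0:ℝ) < 1 + s := by linarith
  have hΓ : (0:ℝ) < Real.Gamma a := Real.Gamma_pos_of_pos ha
  have hmg : Measurable (gammaPDF a 1) := (measurable_gammaPDFReal a 1).ennreal_ofReal
  have hme : Measurable fun z : ℝ => ENNReal.ofReal (Real.exp (-(s * z))) :=
    ((measurable_id.const_mul s).neg.exp).ennreal_ofReal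
  have hexp : ∀ z : ℝ, Real.exp (-(1*z)) * Real.exp (-(s*z)) = Real.exp (-(1+s)*z) := by
    intro z; rw [← Real.exp_add]; congr 1; ring
  rw [gammaMeasure, lintegral_withDensity_eq_lintegral_mul _ hmg hme]
  have hsplit := lintegral_add_compl
    (fun z : ℝ => (gammaPDF a 1 * fun z => ENNReal.ofReal (Real.exp (-(s * z)))) z)
    (measurableSet_Ici (a := (0:ℝ))) (μ := volume)
  rw [compl_Ici] at hsplit
  have hIio : ∫⁻ z in Iio (0:ℝ),
      (gammaPDF a 1 * fun z => ENNReal.ofReal (Real.exp (-(s * z)))) z = 0 := by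
    rw [setLIntegral_congr_fun (g := fun _ => (0:ENNReal)) measurableSet_Iio
      (fun z (hz : z < 0) => by simp [gammaPDF_of_neg hz])]
    simp
  have hIci : ∫⁻ z in Ici (0:ℝ), (gammaPDF a 1 * fun z => ENNReal.ofReal (Real.exp (-(s * z)))) z
      = ∫⁻ z in Ioi (0:ℝ), (gammaPDF a 1 * fun z => ENNReal.ofReal (Real.exp (-(s * z)))) z :=
    (setLIntegral_congr (Ioi_ae_eq_Ici (a := (0:ℝ)))).symm
  rw [← hsplit, hIio, hIci, add_zero]
  have hint : IntegrableOn
      (fun z : ℝ => 1 ^ a / Real.Gamma a * z ^ (a-1) * Real.exp (-(1 * z)) * Real.exp (-(s * z)))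
      (Ioi (0:ℝ)) := by
    have h0 : IntegrableOn (fun z : ℝ => z ^ (a-1) * Real.exp (-(1+s) * z ^ (1:ℝ))) (Ioi (0:ℝ)) :=
      integrableOn_rpow_mul_exp_neg_mul_rpow (by linarith) one_pos h1s
    have h0' : IntegrableOn (fun z : ℝ => z ^ (a-1) * Real.exp (-(1+s) * z)) (Ioi (0:ℝ)) :=
      h0.congr (ae_of_all _ fun z => by beta_reduce; rw [Real.rpow_one])
    exact (h0'.const_mul (1 ^ a / Real.Gamma a)).congr (ae_of_all _ fun z => by
      beta_reduce; rw [← hexp]; ring)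
  have heq : ∀ z ∈ Ioi (0:ℝ), (gammaPDF a 1 * fun z => ENNReal.ofReal (Real.exp (-(s * z)))) z
      = ENNReal.ofReal
        (1 ^ a / Real.Gamma a * z ^ (a-1) * Real.exp (-(1 * z)) * Real.exp (-(s * z))) := by
    intro z hz
    have hz0 : (0:ℝ) ≤ z := le_of_lt hz
    simp only [Pi.mul_apply, gammaPDF_of_nonneg hz0]
    rw [← ENNReal.ofReal_mul (by rw [Real.one_rpow]; positivity)]
  have hnn : 0 ≤ᵐ[volume.restrict (Ioi (0:ℝ))]
      fun z : ℝ => 1 ^ a / Real.Gamma a * z ^ (a-1) * Real.exp (-(1 * z)) * Real.exp (-(s * z)) := by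
    refine (ae_restrict_iff' measurableSet_Ioi).2 (ae_of_all _ fun z hz => ?_)
    have hz0 : (0:ℝ) < z := hz
    rw [Real.one_rpow]
    positivity
  rw [setLIntegral_congr_fun measurableSet_Ioi heq,
    ← ofReal_integral_eq_lintegral_ofReal hint hnn]
  congr 1
  have hpt : ∀ z ∈ Ioi (0:ℝ),
      1 ^ a / Real.Gamma a * z ^ (a-1) * Real.exp (-(1 * z)) * Real.exp (-(s * z))
      = 1 / Real.Gamma a * (z ^ (a-1) * Real.exp (-((1+s) * z))) := by
    intro z hz
    rw [Real.one_rpow, show -((1+s)*z) = -(1+s)*z by ring, ← hexp]; ring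
  have hps : (1/(1+s):ℝ) ^ a = ((1+s) ^ a)⁻¹ := by rw [one_div, Real.inv_rpow h1s.le]
  rw [setIntegral_congr_fun measurableSet_Ioi hpt, integral_const_mul,
    integral_rpow_mul_exp_neg_mul_Ioi ha h1s, hps, Real.rpow_neg h1s.le]
  field_simp

lemma exp_laplace_inv {b : ℝ} (hb : 0 < b) :
    ∫⁻ x, ENNReal.ofReal (Real.exp (-(b/x))) ∂(expMeasure 1)
      = ENNReal.ofReal (2 * Real.sqrt b * besselK 1 (2 * Real.sqrt b)) := by
  have hmg : Measurable (gammaPDF 1 1) := (measurable_gammaPDFReal 1 1).ennreal_ofReal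
  have hme : Measurable fun x : ℝ => ENNReal.ofReal (Real.exp (-(b/x))) :=
    ((measurable_const.div measurable_id).neg.exp).ennreal_ofReal
  rw [expMeasure, gammaMeasure, lintegral_withDensity_eq_lintegral_mul _ hmg hme]
  have hsplit := lintegral_add_compl
    (fun x : ℝ => (gammaPDF 1 1 * fun x => ENNReal.ofReal (Real.exp (-(b/x)))) x)
    (measurableSet_Ici (a := (0:ℝ))) (μ := volume)
  rw [compl_Ici] at hsplit
  have hIio : ∫⁻ x in Iio (0:ℝ),
      (gammaPDF 1 1 * fun x => ENNReal.ofReal (Real.exp (-(b/x)))) x = 0 := by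
    rw [setLIntegral_congr_fun (g := fun _ => (0:ENNReal)) measurableSet_Iio
      (fun x (hx : x < 0) => by simp [gammaPDF_of_neg hx])]
    simp
  have hIci : ∫⁻ x in Ici (0:ℝ), (gammaPDF 1 1 * fun x => ENNReal.ofReal (Real.exp (-(b/x)))) x
      = ∫⁻ x in Ioi (0:ℝ), (gammaPDF 1 1 * fun x => ENNReal.ofReal (Real.exp (-(b/x)))) x :=
    (setLIntegral_congr (Ioi_ae_eq_Ici (a := (0:ℝ)))).symm
  rw [← hsplit, hIio, hIci, add_zero]
  have heq : ∀ x ∈ Ioi (0:ℝ), (gammaPDF 1 1 * fun x => ENNReal.ofReal (Real.exp (-(b/x)))) x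
      = ENNReal.ofReal (Real.exp (-(b/x) - x)) := by
    intro x hx
    have hx0 : (0:ℝ) ≤ x := le_of_lt hx
    have hpdf : gammaPDF 1 1 x = exponentialPDF 1 x := rfl
    simp only [Pi.mul_apply, hpdf, exponentialPDF_of_nonneg hx0]
    rw [← ENNReal.ofReal_mul (by positivity)]
    congr 1
    rw [one_mul, one_mul, ← Real.exp_add]
    congr 1
    ring
  rw [setLIntegral_congr_fun measurableSet_Ioi heq,
    ← ofReal_integral_eq_lintegral_ofReal (aux_exp_integrableOn hb)
      (ae_of_all _ fun x => by positivity),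
    besselK_identity hb]

lemma iIndepFun_ae_eq' {Ω : Type*} [MeasurableSpace Ω] {μ : Measure Ω} {ι : Type*}
    {β : ι → Type*} [m : ∀ i, MeasurableSpace (β i)] {f g : ∀ i, Ω → β i}
    (h : iIndepFun f μ) (hfg : ∀ i, f i =ᵐ[μ] g i) : iIndepFun g μ := by
  rw [iIndepFun_iff_measure_inter_preimage_eq_mul] at h ⊢
  intro S sets hmeas
  have h1 : ∀ i : ι, μ (g i ⁻¹' sets i) = μ (f i ⁻¹' sets i) := fun i =>
    measure_congr (Filter.eventuallyEq_set.2 ((hfg i).mono fun ω hω => by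
      simp only [Set.mem_preimage, hω]))
  have hall : ∀ᵐ ω ∂μ, ∀ i ∈ S, f i ω = g i ω :=
    (ae_ball_iff S.countable_toSet).2 fun i _ => hfg i
  have h2 : μ (⋂ i ∈ S, g i ⁻¹' sets i) = μ (⋂ i ∈ S, f i ⁻¹' sets i) :=
    measure_congr (Filter.eventuallyEq_set.2 (hall.mono fun ω hω => by
      simp only [Set.mem_iInter, Set.mem_preimage]
      exact ⟨fun H i hi => by rw [hω i hi]; exact H i hi,
             fun H i hi => by rw [← hω i hi]; exact H i hi⟩))
  rw [h2, h S hmeas]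
  exact (Finset.prod_congr rfl fun i _ => (h1 i).symm)

theorem stmt_15 (K : ℕ) (hK : 2 ≤ K)
    (α₁ α₂ ρ ε τ : ℝ) (hα₁ : 0 ≤ α₁) (hα₂ : 0 ≤ α₂) (hρ : 0 < ρ) (hε : 0 < ε)
    (hτ : τ = α₁ ^ 2 - ε * α₂ ^ 2) (hτpos : 0 < τ)
    {Ω : Type*} [MeasureSpace Ω] [IsProbabilityMeasure (ℙ : Measure Ω)]
    (X Y Z : Ω → ℝ)
    (hX : Measure.map X ℙ = expMeasure 1)
    (hY : Measure.map Y ℙ = expMeasure 1)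
    (hZ : Measure.map Z ℙ = gammaMeasure (K - 1) 1)
    (hindep : iIndepFun ![X, Y, Z] ℙ) :
    (ℙ {ω | X ω * Y ω * α₁ ^ 2 / (X ω * Y ω * α₂ ^ 2 + X ω * Z ω + 1 / ρ) < ε}).toReal =
      1 - 2 * Real.sqrt (ε / (ρ * τ)) * besselK 1 (2 * Real.sqrt (ε / (ρ * τ))) /
        (1 + ε / τ) ^ ((K : ℝ) - 1) := by
  classical
  have hKr : (2:ℝ) ≤ (K:ℝ) := by exact_mod_cast hK
  set a : ℝ := (K:ℝ) - 1 with ha_def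
  have ha : 0 < a := by rw [ha_def]; linarith
  set s : ℝ := ε / τ with hs_def
  have hs : 0 ≤ s := (div_pos hε hτpos).le
  set b : ℝ := ε / (ρ * τ) with hb_def
  have hb : 0 < b := div_pos hε (mul_pos hρ hτpos)
  haveI hPexp : IsProbabilityMeasure (expMeasure 1) := isProbabilityMeasure_expMeasure one_pos
  haveI hPgam : IsProbabilityMeasure (gammaMeasure a 1) := isProbabilityMeasure_gammaMeasure ha one_pos
  -- a.e. measurability
  have hXae : AEMeasurable X ℙ := by
    by_contra hc
    rw [Measure.map_of_not_aemeasurable hc] at hX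
    have := congrArg (fun μ : Measure ℝ => μ univ) hX
    simp [measure_univ] at this
  have hYae : AEMeasurable Y ℙ := by
    by_contra hc
    rw [Measure.map_of_not_aemeasurable hc] at hY
    have := congrArg (fun μ : Measure ℝ => μ univ) hY
    simp [measure_univ] at this
  have hZae : AEMeasurable Z ℙ := by
    by_contra hc
    rw [Measure.map_of_not_aemeasurable hc] at hZ
    have := congrArg (fun μ : Measure ℝ => μ univ) hZ
    simp [measure_univ] at this
  obtain ⟨X', hX'm, hXX'⟩ : ∃ X', Measurable X' ∧ X =ᵐ[ℙ] X' :=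
    ⟨hXae.mk X, hXae.measurable_mk, hXae.ae_eq_mk⟩
  obtain ⟨Y', hY'm, hYY'⟩ : ∃ Y', Measurable Y' ∧ Y =ᵐ[ℙ] Y' :=
    ⟨hYae.mk Y, hYae.measurable_mk, hYae.ae_eq_mk⟩
  obtain ⟨Z', hZ'm, hZZ'⟩ : ∃ Z', Measurable Z' ∧ Z =ᵐ[ℙ] Z' :=
    ⟨hZae.mk Z, hZae.measurable_mk, hZae.ae_eq_mk⟩
  have hX' : Measure.map X' ℙ = expMeasure 1 := by rw [← Measure.map_congr hXX']; exact hX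
  have hY' : Measure.map Y' ℙ = expMeasure 1 := by rw [← Measure.map_congr hYY']; exact hY
  have hZ' : Measure.map Z' ℙ = gammaMeasure a 1 := by rw [← Measure.map_congr hZZ']; exact hZ
  have hfg : ∀ i : Fin 3, (![X, Y, Z] : Fin 3 → Ω → ℝ) i =ᵐ[ℙ] ![X', Y', Z'] i := by
    intro i
    fin_cases i
    · simpa using hXX'
    · simpa using hYY'
    · simpa using hZZ'
  have hindep' : iIndepFun ![X', Y', Z'] ℙ :=
    iIndepFun_ae_eq' hindep hfg
  have hm : ∀ i : Fin 3, Measurable ((![X', Y', Z'] : Fin 3 → Ω → ℝ) i) := by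
    intro i
    fin_cases i
    · simpa using hX'm
    · simpa using hY'm
    · simpa using hZ'm
  have hWY : IndepFun (fun ω => (X' ω, Z' ω)) Y' ℙ := by
    have := hindep'.indepFun_prodMk hm 0 2 1 (by decide) (by decide)
    simpa using this
  have hXZ : IndepFun X' Z' ℙ := by
    have := hindep'.indepFun (show (0 : Fin 3) ≠ 2 by decide)
    simpa using this
  set μ2 : Measure (ℝ × ℝ) := (expMeasure 1).prod (gammaMeasure a 1) with hμ2
  have hmapXZ : Measure.map (fun ω => (X' ω, Z' ω)) ℙ = μ2 := by
    rw [hμ2, ← hX', ← hZ']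
    exact (indepFun_iff_map_prod_eq_prod_map_map hX'm.aemeasurable hZ'm.aemeasurable).1 hXZ
  have hmapT : Measure.map (fun ω => ((X' ω, Z' ω), Y' ω)) ℙ = μ2.prod (expMeasure 1) := by
    rw [← hmapXZ, ← hY']
    exact (indepFun_iff_map_prod_eq_prod_map_map (hX'm.prodMk hZ'm).aemeasurable
      hY'm.aemeasurable).1 hWY
  set E : Set ((ℝ × ℝ) × ℝ) :=
    {p | p.1.1 * p.2 * α₁ ^ 2 / (p.1.1 * p.2 * α₂ ^ 2 + p.1.1 * p.1.2 + 1 / ρ) < ε} with hE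
  have hEmeas : MeasurableSet E := by
    apply measurableSet_lt _ measurable_const
    fun_prop
  have hstep1 : ℙ {ω | X ω * Y ω * α₁ ^ 2 / (X ω * Y ω * α₂ ^ 2 + X ω * Z ω + 1 / ρ) < ε}
      = (μ2.prod (expMeasure 1)) E := by
    rw [← hmapT, Measure.map_apply ((hX'm.prodMk hZ'm).prodMk hY'm) hEmeas]
    apply measure_congr
    apply Filter.eventuallyEq_set.2
    filter_upwards [hXX', hYY', hZZ'] with ω h1 h2 h3
    simp only [Set.mem_setOf_eq, Set.mem_preimage, hE, h1, h2, h3]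
  set c : ℝ × ℝ → ℝ := fun w => ε * w.2 / τ + ε / (ρ * τ * w.1) with hc
  have hgIic : ∀ a' r : ℝ, gammaMeasure a' r (Iic 0) = 0 := by
    intro a' r
    rw [gammaMeasure, withDensity_apply _ measurableSet_Iic,
      setLIntegral_congr (Iio_ae_eq_Iic (a := (0:ℝ))).symm]
    exact lintegral_gammaPDF_of_nonpos le_rfl
  have hexpIic : expMeasure 1 (Iic 0) = 0 := by rw [expMeasure]; exact hgIic 1 1
  have hae2 : ∀ᵐ w ∂μ2, 0 < w.1 ∧ 0 < w.2 := by
    rw [ae_iff]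
    have hsub : {w : ℝ × ℝ | ¬(0 < w.1 ∧ 0 < w.2)} ⊆ (Iic 0 ×ˢ univ) ∪ (univ ×ˢ Iic 0) := by
      intro w hw
      simp only [Set.mem_setOf_eq, not_and_or, not_lt] at hw
      rcases hw with h | h
      · exact Or.inl ⟨h, mem_univ _⟩
      · exact Or.inr ⟨mem_univ _, h⟩
    refine measure_mono_null hsub (measure_union_null ?_ ?_)
    · rw [hμ2, Measure.prod_prod, hexpIic, zero_mul]
    · rw [hμ2, Measure.prod_prod, hgIic, mul_zero]
  have hslice : ∀ w : ℝ × ℝ, 0 < w.1 → 0 < w.2 →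
      (expMeasure 1) (Prod.mk w ⁻¹' E) = ENNReal.ofReal (1 - Real.exp (-(c w))) := by
    intro w hx hz
    have hcpos : 0 < c w := by
      rw [hc]
      exact add_pos (div_pos (mul_pos hε hz) hτpos)
        (div_pos hε (mul_pos (mul_pos hρ hτpos) hx))
    have hiic : (expMeasure 1) (Prod.mk w ⁻¹' E) = (expMeasure 1) (Prod.mk w ⁻¹' E ∩ Ioi 0) :=
      (measure_inter_conull (by rwa [compl_Ioi])).symm
    have hseteq : Prod.mk w ⁻¹' E ∩ Ioi 0 = Iio (c w) ∩ Ioi 0 := by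
      ext y
      simp only [hE, Set.mem_inter_iff, Set.mem_preimage, Set.mem_setOf_eq, mem_Iio, mem_Ioi]
      refine and_congr_left fun hy => ?_
      have hd : 0 < w.1 * y * α₂ ^ 2 + w.1 * w.2 + 1 / ρ :=
        add_pos (add_pos_of_nonneg_of_pos
          (mul_nonneg (mul_nonneg hx.le hy.le) (sq_nonneg _)) (mul_pos hx hz))
          (by positivity)
      rw [div_lt_iff₀ hd]
      have hcw : c w = (ε * (w.1 * w.2) + ε / ρ) / (w.1 * τ) := by
        rw [hc]; field_simp
      rw [hcw, lt_div_iff₀ (mul_pos hx hτpos), hτ]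
      constructor <;> intro h <;> (ring_nf at h ⊢; linarith)
    rw [hiic, hseteq, measure_inter_conull (by rwa [compl_Ioi])]
    have hac : expMeasure 1 ≪ (volume : Measure ℝ) := by
      rw [expMeasure, gammaMeasure]; exact withDensity_absolutelyContinuous _ _
    rw [measure_congr (hac.ae_eq (Iio_ae_eq_Iic (a := c w)))]
    have h4 : (expMeasure 1) (Iic (c w)) = ∫⁻ y in Iic (c w), exponentialPDF 1 y := by
      rw [expMeasure, gammaMeasure, withDensity_apply _ measurableSet_Iic]; rfl
    rw [h4, lintegral_exponentialPDF_eq_antiDeriv one_pos, if_pos hcpos.le, one_mul]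
  rw [hstep1, Measure.prod_apply hEmeas]
  have hL1congr : ∫⁻ w, (expMeasure 1) (Prod.mk w ⁻¹' E) ∂μ2
      = ∫⁻ w, ENNReal.ofReal (1 - Real.exp (-(c w))) ∂μ2 :=
    lintegral_congr_ae (by filter_upwards [hae2] with w hw; exact hslice w hw.1 hw.2)
  rw [hL1congr,
    lintegral_congr (fun w : ℝ × ℝ => by
      rw [ENNReal.ofReal_sub _ (Real.exp_pos (-(c w))).le, ENNReal.ofReal_one])]
  set L : ℝ≥0∞ := ∫⁻ w, ENNReal.ofReal (Real.exp (-(c w))) ∂μ2 with hL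
  have hcmeas : Measurable fun w : ℝ × ℝ => ENNReal.ofReal (Real.exp (-(c w))) := by
    apply Measurable.ennreal_ofReal
    apply Measurable.exp
    apply Measurable.neg
    rw [hc]
    fun_prop
  have hle1 : (fun w : ℝ × ℝ => ENNReal.ofReal (Real.exp (-(c w)))) ≤ᵐ[μ2] fun _ => 1 := by
    filter_upwards [hae2] with w hw
    have hcpos : 0 ≤ c w := by
      rw [hc]
      exact le_of_lt (add_pos (div_pos (mul_pos hε hw.2) hτpos)
        (div_pos hε (mul_pos (mul_pos hρ hτpos) hw.1)))
    exact ENNReal.ofReal_le_one.2 (Real.exp_le_one_iff.2 (by linarith))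
  have hLle : L ≤ 1 := by
    rw [hL]
    calc ∫⁻ w, ENNReal.ofReal (Real.exp (-(c w))) ∂μ2 ≤ ∫⁻ _, 1 ∂μ2 := lintegral_mono_ae hle1
      _ = 1 := by simp
  have hsub : ∫⁻ w, ((1:ENNReal) - ENNReal.ofReal (Real.exp (-(c w)))) ∂μ2 = 1 - L := by
    rw [hL, lintegral_sub hcmeas ((hLle.trans_lt ENNReal.one_lt_top).ne) hle1]
    simp
  rw [hsub]
  have hfactor : L = ENNReal.ofReal (2 * Real.sqrt b * besselK 1 (2 * Real.sqrt b))
      * ENNReal.ofReal ((1 + s) ^ (-a)) := by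
    rw [hL]
    have hpt : ∀ w : ℝ × ℝ, ENNReal.ofReal (Real.exp (-(c w)))
        = ENNReal.ofReal (Real.exp (-(b / w.1))) * ENNReal.ofReal (Real.exp (-(s * w.2))) := by
      intro w
      rw [← ENNReal.ofReal_mul (Real.exp_pos _).le, ← Real.exp_add]
      congr 1
      simp only [hc, hb_def, hs_def]
      ring
    rw [lintegral_congr hpt, hμ2,
      lintegral_prod_mul (by fun_prop : Measurable fun x : ℝ =>
          ENNReal.ofReal (Real.exp (-(b / x)))).aemeasurable
        (by fun_prop : Measurable fun z : ℝ =>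
          ENNReal.ofReal (Real.exp (-(s * z)))).aemeasurable,
      exp_laplace_inv hb, gamma_laplace ha hs]
  have hA : 0 ≤ 2 * Real.sqrt b * besselK 1 (2 * Real.sqrt b) := by
    rw [← besselK_identity hb]
    exact integral_nonneg fun x => (Real.exp_pos _).le
  have hB : (0:ℝ) ≤ (1 + s) ^ (-a) := Real.rpow_nonneg (by linarith) _
  rw [ENNReal.toReal_sub_of_le hLle ENNReal.one_ne_top, ENNReal.toReal_one, hfactor,
    ENNReal.toReal_mul, ENNReal.toReal_ofReal hA, ENNReal.toReal_ofReal hB,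
    Real.rpow_neg (by linarith : (0:ℝ) ≤ 1 + s), ← div_eq_mul_inv]
end

section
/- (Lemma 2, closed form.) Let K ≥ 2 and N ≥ 1 be integers, let α₁, α₂ ≥ 0, ρ > 0, let R > 0 be the target rate, set ε = 2^R − 1, and assume τ := α₁² − ε·α₂² > 0. For p = 1, …, N let (X_p, Y_p, Z_p) be mutually independent random variables with X_p, Y_p ~ Exp(1) and Z_p ~ Gamma(K−1,1), the N triples being independent and identically distributed. Then the probability that X_p·Y_p·α₁²/(X_p·Y_p·α₂² + X_p·Z_p + 1/ρ) < ε holds simultaneously for all p = 1, …, N equals ( 1 − 2·√(ε/(ρτ))·K₁(2·√(ε/(ρτ))) / (1 + ε/τ)^{K−1} )^N. -/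
open MeasureTheory ProbabilityTheory

open Real Set ENNReal

section Aux

lemma besselK_nonneg {ν x : ℝ} : 0 ≤ besselK ν x := by
  apply setIntegral_nonneg measurableSet_Ioi
  intro t _
  exact mul_nonneg (exp_nonneg _) (cosh_pos _).le

lemma integrableOn_exp_sub_div {c : ℝ} (hc : 0 < c) :
    IntegrableOn (fun x : ℝ => rexp (-x - c / x)) (Ioi 0) := by
  have h1 : IntegrableOn (fun x : ℝ => rexp (-1 * x)) (Ioi (0:ℝ)) :=
    exp_neg_integrableOn_Ioi 0 one_pos
  refine h1.mono' ?_ ?_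
  · exact ((measurable_id.neg.sub (measurable_const.div measurable_id)).exp).aestronglyMeasurable
  · refine (ae_restrict_iff' measurableSet_Ioi).2 (ae_of_all _ fun x hx => ?_)
    have hx : (0:ℝ) < x := hx
    rw [Real.norm_eq_abs, abs_of_nonneg (exp_nonneg _)]
    apply Real.exp_le_exp.2
    have : 0 ≤ c / x := by positivity
    linarith

lemma integral_exp_sub_div {c : ℝ} (hc : 0 < c) :
    ∫ x in Ioi (0:ℝ), rexp (-x - c / x)
      = 2 * Real.sqrt c * besselK 1 (2 * Real.sqrt c) := by
  set b := Real.sqrt c with hbdef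
  have hb0 : 0 < b := Real.sqrt_pos.2 hc
  have hbb : b * b = c := Real.mul_self_sqrt hc.le
  set g : ℝ → ℝ := fun x => rexp (-x - c / x) with hg
  -- key pointwise identity
  have key : ∀ t : ℝ, g (b * rexp t) = rexp (-(2*b) * Real.cosh t) := by
    intro t
    have hbne : b ≠ 0 := hb0.ne'
    have het : rexp t ≠ 0 := (exp_pos t).ne'
    have h1 : c / (b * rexp t) = b * rexp (-t) := by
      rw [Real.exp_neg]
      field_simp
      rw [← hbb]
      ring
    simp only [hg]
    rw [h1, Real.cosh_eq, Real.exp_neg]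
    congr 1
    ring
  -- images
  have himg1 : (fun t : ℝ => b * rexp t) '' Ioi 0 = Ioi b := by
    ext x
    simp only [mem_image, mem_Ioi]
    constructor
    · rintro ⟨t, ht, rfl⟩
      nlinarith [Real.add_one_le_exp t]
    · intro hx
      have hxb : 1 < x / b := (one_lt_div hb0).2 hx
      refine ⟨Real.log (x / b), Real.log_pos hxb, ?_⟩
      rw [Real.exp_log (by positivity)]
      field_simp
  have himg2 : (fun t : ℝ => b * rexp (-t)) '' Ioi 0 = Ioo 0 b := by
    ext x
    simp only [mem_image, mem_Ioi, mem_Ioo]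
    constructor
    · rintro ⟨t, ht, rfl⟩
      constructor
      · positivity
      · have h1 : rexp (-t) < 1 := Real.exp_lt_one_iff.2 (by linarith)
        nlinarith
    · rintro ⟨hx0, hxb⟩
      have hxb' : 1 < b / x := (one_lt_div hx0).2 hxb
      refine ⟨Real.log (b / x), Real.log_pos hxb', ?_⟩
      rw [← Real.log_inv, Real.exp_log (by positivity)]
      field_simp
  -- derivatives
  have hder1 : ∀ t ∈ Ioi (0:ℝ), HasDerivWithinAt (fun t : ℝ => b * rexp t) (b * rexp t) (Ioi 0) t :=
    fun t _ => ((Real.hasDerivAt_exp t).const_mul b).hasDerivWithinAt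
  have hder2 : ∀ t ∈ Ioi (0:ℝ),
      HasDerivWithinAt (fun t : ℝ => b * rexp (-t)) (b * (rexp (-t) * (-1))) (Ioi 0) t := by
    intro t _
    exact (((Real.hasDerivAt_exp (-t)).comp t (hasDerivAt_neg t)).const_mul b).hasDerivWithinAt
  -- injectivity
  have hinj1 : InjOn (fun t : ℝ => b * rexp t) (Ioi 0) := by
    intro s _ t _ h
    simpa [hb0.ne'] using Real.exp_injective (mul_left_cancel₀ hb0.ne' h)
  have hinj2 : InjOn (fun t : ℝ => b * rexp (-t)) (Ioi 0) := by
    intro s _ t _ h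
    have := Real.exp_injective (mul_left_cancel₀ hb0.ne' h)
    linarith [neg_injective this]
  -- change of variables
  have e1 : ∫ x in Ioi b, g x
      = ∫ t in Ioi (0:ℝ), |b * rexp t| • g (b * rexp t) := by
    rw [← himg1]
    exact integral_image_eq_integral_abs_deriv_smul measurableSet_Ioi hder1 hinj1 g
  have e2 : ∫ x in Ioo 0 b, g x
      = ∫ t in Ioi (0:ℝ), |b * (rexp (-t) * (-1))| • g (b * rexp (-t)) := by
    rw [← himg2]
    exact integral_image_eq_integral_abs_deriv_smul measurableSet_Ioi hder2 hinj2 g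
  -- integrability transfer
  have hi1 : IntegrableOn (fun t : ℝ => |b * rexp t| • g (b * rexp t)) (Ioi 0) := by
    rw [← integrableOn_image_iff_integrableOn_abs_deriv_smul measurableSet_Ioi hder1 hinj1 g,
      himg1]
    exact (integrableOn_exp_sub_div hc).mono_set (Ioi_subset_Ioi hb0.le)
  have hi2 : IntegrableOn (fun t : ℝ => |b * (rexp (-t) * (-1))| • g (b * rexp (-t))) (Ioi 0) := by
    rw [← integrableOn_image_iff_integrableOn_abs_deriv_smul measurableSet_Ioi hder2 hinj2 g,
      himg2]
    exact (integrableOn_exp_sub_div hc).mono_set (fun x hx => hx.1)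
  -- assemble
  have hsplit : ∫ x in Ioi (0:ℝ), g x = (∫ x in Ioo 0 b, g x) + ∫ x in Ioi b, g x := by
    rw [← Ioo_union_Ici_eq_Ioi hb0, setIntegral_union ?_ measurableSet_Ici
      ((integrableOn_exp_sub_div hc).mono_set (fun x hx => hx.1))
      ((integrableOn_exp_sub_div hc).mono_set (fun x hx => lt_of_lt_of_le hb0 hx)),
      integral_Ici_eq_integral_Ioi]
    · rw [Set.disjoint_left]
      rintro x ⟨_, h1⟩ h2
      exact absurd h2 (not_le.2 h1)
  rw [hsplit, e1, e2, ← integral_add hi2 hi1]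
  rw [besselK, ← integral_const_mul]
  apply setIntegral_congr_fun measurableSet_Ioi
  intro t _
  have k1 := key t
  have k2 := key (-t)
  rw [Real.cosh_neg] at k2
  have a1 : |b * (rexp (-t) * -1)| = b * rexp (-t) := by
    rw [abs_mul, abs_of_pos hb0, abs_mul, abs_of_pos (exp_pos _), abs_neg, abs_one, mul_one]
  have a2 : |b * rexp t| = b * rexp t := abs_of_pos (by positivity)
  simp only [smul_eq_mul]
  rw [k1, k2, a1, a2, one_mul, Real.cosh_eq]
  ring

-- tail of exponential
lemma exp_tail {t : ℝ} (ht : 0 ≤ t) :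
    expMeasure 1 (Ici t) = ENNReal.ofReal (rexp (-t)) := by
  rw [expMeasure, gammaMeasure, withDensity_apply _ measurableSet_Ici]
  have h1 : ∫⁻ x in Ici t, gammaPDF 1 1 x = ∫⁻ x in Ici t, ENNReal.ofReal (rexp (-x)) := by
    apply setLIntegral_congr_fun measurableSet_Ici
    refine fun x hx => ?_
    have hx0 : (0:ℝ) ≤ x := le_trans ht hx
    rw [gammaPDF_of_nonneg hx0]
    norm_num
  rw [h1, ← ofReal_integral_eq_lintegral_ofReal]
  · rw [integral_Ici_eq_integral_Ioi, integral_exp_neg_Ioi]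
  · have : IntegrableOn (fun x : ℝ => rexp (-x)) (Ici t) := by
      rw [integrableOn_Ici_iff_integrableOn_Ioi]
      simpa using exp_neg_integrableOn_Ioi t one_pos
    exact this
  · exact ae_of_all _ fun x => exp_nonneg _

lemma exp_Iic_zero : expMeasure 1 (Iic 0) = 0 := by
  rw [expMeasure, gammaMeasure, withDensity_apply _ measurableSet_Iic,
    setLIntegral_congr Iio_ae_eq_Iic.symm]
  exact lintegral_gammaPDF_of_nonpos le_rfl

lemma gamma_Iio_zero {a : ℝ} : gammaMeasure a 1 (Iio 0) = 0 := by
  rw [gammaMeasure, withDensity_apply _ measurableSet_Iio]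
  exact lintegral_gammaPDF_of_nonpos le_rfl

-- Laplace transform of Gamma(a,1) at s
lemma gamma_exp_lintegral {a s : ℝ} (ha : 0 < a) (hs : 0 < s) :
    ∫⁻ z, ENNReal.ofReal (rexp (-(s * z))) ∂(gammaMeasure a 1)
      = ENNReal.ofReal ((1 + s) ^ (-a)) := by
  have h1s : (0:ℝ) < 1 + s := by linarith
  have hm : Measurable (gammaPDF a 1) := (measurable_gammaPDFReal a 1).ennreal_ofReal
  have hm2 : Measurable (gammaPDF a (1+s)) := (measurable_gammaPDFReal a (1+s)).ennreal_ofReal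
  rw [gammaMeasure, lintegral_withDensity_eq_lintegral_mul _ hm (show Measurable fun z : ℝ => ENNReal.ofReal (rexp (-(s * z))) by fun_prop)]
  have key : ∀ z : ℝ, (gammaPDF a 1 * fun z => ENNReal.ofReal (rexp (-(s * z)))) z
      = ENNReal.ofReal ((1 + s) ^ (-a)) * gammaPDF a (1 + s) z := by
    intro z
    simp only [Pi.mul_apply]
    rcases lt_or_ge z 0 with hz | hz
    · rw [gammaPDF_of_neg hz, gammaPDF_of_neg hz, zero_mul, mul_zero]
    · rw [gammaPDF_of_nonneg hz, gammaPDF_of_nonneg hz,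
        ← ENNReal.ofReal_mul (by positivity), ← ENNReal.ofReal_mul (by positivity)]
      congr 1
      rw [Real.rpow_neg h1s.le]
      have hexp : rexp (-(1 * z)) * rexp (-(s * z)) = rexp (-((1+s) * z)) := by
        rw [← Real.exp_add]; ring_nf
      have hpow : ((1:ℝ) + s) ^ a ≠ 0 := (Real.rpow_pos_of_pos h1s a).ne'
      field_simp
      rw [Real.one_rpow, mul_assoc, ← Real.exp_add, show -z + -(z * s) = -(z * (1 + s)) by ring]
      ring
  rw [lintegral_congr key, lintegral_const_mul _ hm2,
    lintegral_gammaPDF_eq_one ha h1s, mul_one]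

lemma exp_inv_lintegral {c : ℝ} (hc : 0 < c) :
    ∫⁻ x, ENNReal.ofReal (rexp (-(c / x))) ∂(expMeasure 1)
      = ENNReal.ofReal (2 * Real.sqrt c * besselK 1 (2 * Real.sqrt c)) := by
  have hm : Measurable (gammaPDF 1 1) := (measurable_gammaPDFReal 1 1).ennreal_ofReal
  have hgm : Measurable fun x : ℝ => ENNReal.ofReal (rexp (-(c / x))) := by
    apply Measurable.ennreal_ofReal
    apply Measurable.exp
    exact (measurable_const.div measurable_id).neg
  rw [expMeasure, gammaMeasure, lintegral_withDensity_eq_lintegral_mul _ hm hgm]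
  rw [← lintegral_add_compl _ measurableSet_Ici (μ := volume), compl_Ici]
  have hneg : ∫⁻ x in Iio (0:ℝ), (gammaPDF 1 1 * fun x => ENNReal.ofReal (rexp (-(c / x)))) x = 0 := by
    rw [setLIntegral_congr_fun measurableSet_Iio
      (fun x (hx : x < 0) => by
        simp only [Pi.mul_apply]
        rw [gammaPDF_of_neg hx, zero_mul])]
    exact lintegral_zero
  rw [hneg, add_zero, setLIntegral_congr Ioi_ae_eq_Ici.symm]
  have hcongr : ∫⁻ x in Ioi (0:ℝ), (gammaPDF 1 1 * fun x => ENNReal.ofReal (rexp (-(c / x)))) x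
      = ∫⁻ x in Ioi (0:ℝ), ENNReal.ofReal (rexp (-x - c / x)) := by
    apply setLIntegral_congr_fun measurableSet_Ioi
    refine fun x (hx : 0 < x) => ?_
    simp only [Pi.mul_apply]
    rw [gammaPDF_of_nonneg hx.le, ← ENNReal.ofReal_mul (by positivity)]
    congr 1
    rw [Real.Gamma_one]
    rw [show (1:ℝ) - 1 = 0 by norm_num, Real.rpow_zero]
    rw [Real.one_rpow, one_div_one, one_mul, one_mul, ← Real.exp_add]
    ring_nf
  rw [hcongr, ← ofReal_integral_eq_lintegral_ofReal (integrableOn_exp_sub_div hc)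
    (ae_of_all _ fun x => exp_nonneg _), integral_exp_sub_div hc]

lemma exp_ae_pos' : ∀ᵐ x ∂(expMeasure 1), 0 < x := by
  rw [ae_iff]
  have h : {x : ℝ | ¬ 0 < x} = Iic 0 := by ext x; simp
  rw [h]; exact exp_Iic_zero

lemma gamma_ae_nonneg' {a : ℝ} : ∀ᵐ z ∂(gammaMeasure a 1), 0 ≤ z := by
  rw [ae_iff]
  have h : {z : ℝ | ¬ 0 ≤ z} = Iio 0 := by ext z; simp
  rw [h]; exact gamma_Iio_zero

end Aux

theorem stmt_16 (K N : ℕ) (hK : 2 ≤ K) (hN : 1 ≤ N)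
    (α₁ α₂ ρ R ε τ : ℝ) (hα₁ : 0 ≤ α₁) (hα₂ : 0 ≤ α₂) (hρ : 0 < ρ) (hR : 0 < R)
    (hε : ε = 2 ^ R - 1) (hτ : τ = α₁ ^ 2 - ε * α₂ ^ 2) (hτpos : 0 < τ)
    {Ω : Type*} [MeasureSpace Ω] [IsProbabilityMeasure (ℙ : Measure Ω)]
    (X Y Z : Fin N → Ω → ℝ)
    (hiid : iIndepFun (fun p ω => (X p ω, Y p ω, Z p ω)) ℙ)
    (hlaw : ∀ p, Measure.map (fun ω => (X p ω, Y p ω, Z p ω)) ℙ =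
      (expMeasure 1).prod ((expMeasure 1).prod (gammaMeasure (K - 1) 1))) :
    (ℙ {ω | ∀ p : Fin N,
        X p ω * Y p ω * α₁ ^ 2 / (X p ω * Y p ω * α₂ ^ 2 + X p ω * Z p ω + 1 / ρ) < ε}).toReal =
      (1 - 2 * Real.sqrt (ε / (ρ * τ)) * besselK 1 (2 * Real.sqrt (ε / (ρ * τ))) /
        (1 + ε / τ) ^ ((K : ℝ) - 1)) ^ N := by
  -- basic positivity facts
  have hε0 : 0 < ε := by
    have h2 : (1:ℝ) < 2 ^ R := by
      rw [show (1:ℝ) = 2 ^ (0:ℝ) by simp]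
      exact Real.rpow_lt_rpow_left_iff (by norm_num) |>.2 hR
    rw [hε]; linarith
  have ha : 0 < (K:ℝ) - 1 := by
    have : (2:ℝ) ≤ K := by exact_mod_cast hK
    linarith
  set s : ℝ := ε / τ with hsdef
  set c : ℝ := ε / (ρ * τ) with hcdef
  have hs0 : 0 < s := div_pos hε0 hτpos
  have hc0 : 0 < c := div_pos hε0 (mul_pos hρ hτpos)
  -- measures
  set μ : Measure ℝ := expMeasure 1 with hμdef
  set γ : Measure ℝ := gammaMeasure ((K:ℝ) - 1) 1 with hγdef
  haveI : IsProbabilityMeasure μ := isProbabilityMeasure_expMeasure one_pos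
  haveI : IsProbabilityMeasure γ := isProbabilityMeasure_gammaMeasure ha one_pos
  set m : Measure (ℝ × ℝ × ℝ) := μ.prod (μ.prod γ) with hmdef
  haveI : IsProbabilityMeasure m := by infer_instance
  -- the one-branch event
  set F : ℝ × ℝ × ℝ → ℝ := fun q =>
    q.1 * q.2.1 * α₁ ^ 2 / (q.1 * q.2.1 * α₂ ^ 2 + q.1 * q.2.2 + 1 / ρ) with hFdef
  have hF : Measurable F := by
    have h1 : Measurable fun q : ℝ × ℝ × ℝ => q.1 * q.2.1 * α₁ ^ 2 :=
      (measurable_fst.mul measurable_snd.fst).mul measurable_const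
    have h2 : Measurable fun q : ℝ × ℝ × ℝ => q.1 * q.2.1 * α₂ ^ 2 + q.1 * q.2.2 + 1 / ρ :=
      (((measurable_fst.mul measurable_snd.fst).mul measurable_const).add
        (measurable_fst.mul measurable_snd.snd)).add measurable_const
    exact h1.div h2
  set S : Set (ℝ × ℝ × ℝ) := F ⁻¹' Iio ε with hSdef
  have hS : MeasurableSet S := hF measurableSet_Iio
  -- the inner slice computation
  have inner : ∀ x : ℝ, 0 < x → (μ.prod γ) (Prod.mk x ⁻¹' Sᶜ)
      = ENNReal.ofReal (rexp (-(c / x))) * ENNReal.ofReal ((1 + s) ^ (-((K:ℝ) - 1))) := by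
    intro x hx
    have hxne : x ≠ 0 := hx.ne'
    -- a.e. equivalence with the half-plane
    have hae : ∀ᵐ p ∂(μ.prod γ), 0 < p.1 ∧ 0 ≤ p.2 := by
      rw [ae_iff]
      have hsub : {p : ℝ × ℝ | ¬(0 < p.1 ∧ 0 ≤ p.2)}
          ⊆ (Iic 0 ×ˢ univ) ∪ (univ ×ˢ Iio 0) := by
        rintro ⟨y, z⟩ h
        simp only [mem_setOf_eq, not_and_or, not_lt, not_le] at h
        rcases h with h | h
        · exact Or.inl ⟨h, trivial⟩
        · exact Or.inr ⟨trivial, h⟩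
      refine measure_mono_null hsub (measure_union_null ?_ ?_)
      · rw [Measure.prod_prod]
        have h0 : μ (Iic 0) = 0 := exp_Iic_zero
        rw [h0, zero_mul]
      · rw [Measure.prod_prod]
        have h0 : γ (Iio 0) = 0 := gamma_Iio_zero
        rw [h0, mul_zero]
    have hseteq : Prod.mk x ⁻¹' Sᶜ =ᵐ[μ.prod γ] {p : ℝ × ℝ | s * p.2 + c / x ≤ p.1} := by
      rw [Filter.eventuallyEq_set]
      filter_upwards [hae] with p hp
      obtain ⟨hy, hz⟩ := hp
      obtain ⟨y, z⟩ := p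
      simp only [mem_preimage, mem_compl_iff, hSdef, mem_Iio, not_lt, mem_setOf_eq, hFdef]
      have hD : 0 < x * y * α₂ ^ 2 + x * z + 1 / ρ := by
        have h1 : 0 ≤ x * y * α₂ ^ 2 := by positivity
        have h2 : 0 ≤ x * z := by positivity
        have h3 : 0 < 1 / ρ := by positivity
        linarith
      rw [le_div_iff₀ hD]
      have hxτ : 0 < x * τ := mul_pos hx hτpos
      constructor
      · intro h
        rw [← mul_le_mul_iff_of_pos_right hxτ]
        have hexp : (s * z + c / x) * (x * τ) = ε * x * z + ε / ρ := by
          rw [hsdef, hcdef]; field_simp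
        rw [hexp, hτ]
        ring_nf at h ⊢
        linarith
      · intro h
        rw [← mul_le_mul_iff_of_pos_right hxτ] at h
        have hexp : (s * z + c / x) * (x * τ) = ε * x * z + ε / ρ := by
          rw [hsdef, hcdef]; field_simp
        rw [hexp, hτ] at h
        ring_nf at h ⊢
        linarith
    rw [measure_congr hseteq]
    have hTmeas : MeasurableSet {p : ℝ × ℝ | s * p.2 + c / x ≤ p.1} :=
      measurableSet_le ((measurable_snd.const_mul s).add measurable_const) measurable_fst
    rw [Measure.prod_apply_symm hTmeas]
    have hpre : ∀ z : ℝ, ((fun y => (y, z)) ⁻¹' {p : ℝ × ℝ | s * p.2 + c / x ≤ p.1})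
        = Ici (s * z + c / x) := fun z => rfl
    simp_rw [hpre]
    have hcongr : ∫⁻ z, μ (Ici (s * z + c / x)) ∂γ
        = ∫⁻ z, ENNReal.ofReal (rexp (-(s * z))) * ENNReal.ofReal (rexp (-(c / x))) ∂γ := by
      apply lintegral_congr_ae
      filter_upwards [gamma_ae_nonneg' (a := (K:ℝ) - 1)] with z hz
      have harg : 0 ≤ s * z + c / x := by positivity
      rw [hμdef, exp_tail harg, ← ENNReal.ofReal_mul (exp_nonneg _), ← Real.exp_add]
      congr 2
      ring
    rw [hcongr, lintegral_mul_const _ (show Measurable fun z : ℝ => ENNReal.ofReal (rexp (-(s * z))) by fun_prop),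
      hγdef, gamma_exp_lintegral ha hs0, mul_comm]
  -- total one-branch failure probability
  have hcompl : m Sᶜ = ENNReal.ofReal
      ((1 + s) ^ (-((K:ℝ) - 1)) * (2 * Real.sqrt c * besselK 1 (2 * Real.sqrt c))) := by
    rw [hmdef, Measure.prod_apply hS.compl]
    have : ∫⁻ x, (μ.prod γ) (Prod.mk x ⁻¹' Sᶜ) ∂μ
        = ∫⁻ x, ENNReal.ofReal (rexp (-(c / x))) * ENNReal.ofReal ((1 + s) ^ (-((K:ℝ) - 1))) ∂μ := by
      apply lintegral_congr_ae
      filter_upwards [exp_ae_pos'] with x hx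
      exact inner x hx
    rw [this, lintegral_mul_const _ (by
        apply Measurable.ennreal_ofReal
        exact ((measurable_const.div measurable_id).neg).exp),
      hμdef, exp_inv_lintegral hc0,
      ← ENNReal.ofReal_mul (mul_nonneg (by positivity) besselK_nonneg), mul_comm]
  -- single branch probability
  have hbranch : (m S).toReal = 1 - 2 * Real.sqrt c * besselK 1 (2 * Real.sqrt c) /
      (1 + s) ^ ((K:ℝ) - 1) := by
    have hsum : m S + m Sᶜ = 1 := by
      rw [measure_add_measure_compl hS]
      exact measure_univ
    have hA : (m Sᶜ).toReal
        = (1 + s) ^ (-((K:ℝ) - 1)) * (2 * Real.sqrt c * besselK 1 (2 * Real.sqrt c)) := by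
      rw [hcompl, ENNReal.toReal_ofReal]
      have h1 : (0:ℝ) ≤ (1 + s) ^ (-((K:ℝ) - 1)) := by positivity
      have h2 : (0:ℝ) ≤ besselK 1 (2 * Real.sqrt c) := besselK_nonneg
      positivity
    have hfin : (m S).toReal + (m Sᶜ).toReal = 1 := by
      rw [← ENNReal.toReal_add (measure_ne_top m S) (measure_ne_top m Sᶜ), hsum]
      simp
    rw [Real.rpow_neg (by positivity), inv_mul_eq_div] at hA
    linarith
  -- independence: pass to the product
  set T : Fin N → Ω → ℝ × ℝ × ℝ := fun p ω => (X p ω, Y p ω, Z p ω) with hTdef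
  have haem : ∀ p, AEMeasurable (T p) ℙ := by
    intro p
    by_contra h
    have h0 := hlaw p
    rw [Measure.map_of_not_aemeasurable h] at h0
    have h1 : m univ = 0 := by rw [← h0]; simp
    rw [measure_univ] at h1
    exact one_ne_zero h1
  have hset : {ω | ∀ p : Fin N,
      X p ω * Y p ω * α₁ ^ 2 / (X p ω * Y p ω * α₂ ^ 2 + X p ω * Z p ω + 1 / ρ) < ε}
      = ⋂ p, T p ⁻¹' S := by
    ext ω
    simp only [mem_setOf_eq, mem_iInter, mem_preimage, hSdef, hFdef, mem_Iio, hTdef]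
  have hprod : ℙ (⋂ p, T p ⁻¹' S) = (m S) ^ N := by
    rw [hiid.meas_iInter (fun p => ⟨S, hS, rfl⟩)]
    have : ∀ p : Fin N, ℙ (T p ⁻¹' S) = m S := by
      intro p
      rw [← Measure.map_apply_of_aemeasurable (haem p) hS, hlaw p]
    rw [Finset.prod_congr rfl (fun p _ => this p), Finset.prod_const, Finset.card_univ,
      Fintype.card_fin]
  rw [hset, hprod, ENNReal.toReal_pow, hbranch]
end

section
/- Let K ≥ 2 and N ≥ 1 be integers, ε > 0, τ > 0. Then lim_{ρ→∞} ( 1 − 2·√(ε/(ρτ))·K₁(2·√(ε/(ρτ))) / (1 + ε/τ)^{K−1} )^N = ( 1 − 1/(1 + ε/τ)^{K−1} )^N, and this limit is strictly positive. -/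
open Filter

open MeasureTheory Real Set in
lemma xK1_eq (x : ℝ) (hx : 0 < x) :
    x * besselK 1 x = ∫ u in Ioi (0 : ℝ), Real.exp (-Real.sqrt (x ^ 2 + u ^ 2)) := by
  have himg : (fun t => x * Real.sinh t) '' Ioi 0 = Ioi 0 := by
    ext u
    constructor
    · rintro ⟨t, ht, rfl⟩
      exact mul_pos hx (Real.sinh_pos_iff.mpr ht)
    · intro hu
      refine ⟨Real.arsinh (u / x), Real.arsinh_pos_iff.mpr (div_pos hu hx), ?_⟩
      show x * Real.sinh (Real.arsinh (u / x)) = u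
      rw [Real.sinh_arsinh]; field_simp
  have hderiv : ∀ t ∈ Ioi (0 : ℝ),
      HasDerivWithinAt (fun t => x * Real.sinh t) (x * Real.cosh t) (Ioi 0) t :=
    fun t _ => ((Real.hasDerivAt_sinh t).const_mul x).hasDerivWithinAt
  have hinj : Set.InjOn (fun t => x * Real.sinh t) (Ioi 0) :=
    fun a _ b _ h => Real.sinh_injective (mul_left_cancel₀ hx.ne' h)
  have key := integral_image_eq_integral_abs_deriv_smul measurableSet_Ioi hderiv hinj
    (fun u => Real.exp (-Real.sqrt (x ^ 2 + u ^ 2)))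
  rw [himg] at key
  rw [key, besselK, ← MeasureTheory.integral_const_mul]
  refine setIntegral_congr_fun measurableSet_Ioi (fun t ht => ?_)
  have hcosh : 0 < Real.cosh t := Real.cosh_pos t
  have hs : Real.sqrt (x ^ 2 + (x * Real.sinh t) ^ 2) = x * Real.cosh t := by
    have h1 : x ^ 2 + (x * Real.sinh t) ^ 2 = (x * Real.cosh t) ^ 2 := by
      have := Real.cosh_sq t
      nlinarith
    rw [h1, Real.sqrt_sq (by positivity)]
  simp only [smul_eq_mul, hs, abs_of_pos (mul_pos hx hcosh), one_mul]
  ring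

open MeasureTheory Real Set in
lemma xK1_tendsto : Tendsto (fun x => x * besselK 1 x) (nhdsWithin 0 (Ioi 0)) (nhds 1) := by
  have hexp : IntegrableOn (fun u : ℝ => Real.exp (-u)) (Ioi (0:ℝ)) :=
    (exp_neg_integrableOn_Ioi 0 one_pos).congr (by filter_upwards with u; simp)
  have hint : ∀ x : ℝ, IntegrableOn (fun u => Real.exp (-Real.sqrt (x ^ 2 + u ^ 2))) (Ioi 0) := by
    intro x
    refine Integrable.mono hexp ?_ ?_
    · exact (Continuous.aestronglyMeasurable (by continuity)).restrict
    · filter_upwards [ae_restrict_mem measurableSet_Ioi] with u hu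
      simp only [norm_eq_abs, abs_exp, exp_le_exp]
      refine neg_le_neg ?_
      calc u = Real.sqrt (u ^ 2) := (Real.sqrt_sq (le_of_lt hu)).symm
        _ ≤ Real.sqrt (x ^ 2 + u ^ 2) := Real.sqrt_le_sqrt (by nlinarith)
  have hup : ∀ x : ℝ, (∫ u in Ioi (0:ℝ), Real.exp (-Real.sqrt (x ^ 2 + u ^ 2))) ≤ 1 := by
    intro x
    rw [← integral_exp_neg_Ioi_zero]
    refine setIntegral_mono_on (hint x) hexp measurableSet_Ioi (fun u hu => ?_)
    refine Real.exp_le_exp.mpr (neg_le_neg ?_)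
    calc u = Real.sqrt (u ^ 2) := (Real.sqrt_sq (le_of_lt hu)).symm
      _ ≤ Real.sqrt (x ^ 2 + u ^ 2) := Real.sqrt_le_sqrt (by nlinarith)
  have hlo : ∀ x : ℝ, 0 ≤ x →
      Real.exp (-x) ≤ ∫ u in Ioi (0:ℝ), Real.exp (-Real.sqrt (x ^ 2 + u ^ 2)) := by
    intro x hx
    have heq : Real.exp (-x) = ∫ u in Ioi (0:ℝ), Real.exp (-x) * Real.exp (-u) := by
      rw [MeasureTheory.integral_const_mul, integral_exp_neg_Ioi_zero, mul_one]
    rw [heq]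
    refine setIntegral_mono_on (hexp.const_mul _) (hint x) measurableSet_Ioi (fun u hu => ?_)
    rw [← Real.exp_add]
    refine Real.exp_le_exp.mpr ?_
    have h1 : Real.sqrt (x ^ 2 + u ^ 2) ≤ Real.sqrt ((x + u) ^ 2) :=
      Real.sqrt_le_sqrt (by nlinarith [le_of_lt (show (0:ℝ) < u from hu)])
    have h2 : Real.sqrt ((x + u) ^ 2) = x + u :=
      Real.sqrt_sq (add_nonneg hx (le_of_lt hu))
    linarith
  have hcong : ∀ x ∈ Ioi (0:ℝ), x * besselK 1 x
      = ∫ u in Ioi (0:ℝ), Real.exp (-Real.sqrt (x ^ 2 + u ^ 2)) := fun x hx => xK1_eq x hx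
  have hsq : Tendsto (fun x : ℝ => ∫ u in Ioi (0:ℝ), Real.exp (-Real.sqrt (x ^ 2 + u ^ 2)))
      (nhdsWithin 0 (Ioi 0)) (nhds 1) := by
    refine tendsto_of_tendsto_of_tendsto_of_le_of_le' (g := fun x : ℝ => Real.exp (-x))
      (h := fun _ : ℝ => (1:ℝ)) ?_ tendsto_const_nhds ?_ ?_
    · have h : Tendsto (fun x : ℝ => Real.exp (-x)) (nhds 0) (nhds 1) := by
        have := (Real.continuous_exp.comp continuous_neg).tendsto 0
        simpa [Function.comp_def] using this
      exact h.mono_left nhdsWithin_le_nhds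
    · filter_upwards [self_mem_nhdsWithin] with x hx using hlo x (le_of_lt hx)
    · filter_upwards [self_mem_nhdsWithin] with x _ using hup x
  refine Tendsto.congr' ?_ hsq
  filter_upwards [self_mem_nhdsWithin] with x hx using (hcong x hx).symm

theorem stmt_18 (K N : ℕ) (hK : 2 ≤ K) (hN : 1 ≤ N) (ε τ : ℝ) (hε : 0 < ε) (hτ : 0 < τ) :
    Tendsto
      (fun ρ : ℝ =>
        (1 - 2 * Real.sqrt (ε / (ρ * τ)) * besselK 1 (2 * Real.sqrt (ε / (ρ * τ))) /
          (1 + ε / τ) ^ ((K : ℝ) - 1)) ^ N)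
      atTop (nhds ((1 - 1 / (1 + ε / τ) ^ ((K : ℝ) - 1)) ^ N)) ∧
    0 < (1 - 1 / (1 + ε / τ) ^ ((K : ℝ) - 1)) ^ N := by
  have hC : (1:ℝ) < (1 + ε / τ) ^ ((K : ℝ) - 1) := by
    refine Real.one_lt_rpow (by have := div_pos hε hτ; linarith) ?_
    have h2 : (2:ℝ) ≤ (K:ℝ) := by exact_mod_cast hK
    linarith
  have hpos : 0 < (1 - 1 / (1 + ε / τ) ^ ((K : ℝ) - 1)) ^ N := by
    have hd : 1 / (1 + ε / τ) ^ ((K : ℝ) - 1) < 1 := by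
      rw [div_lt_one (by linarith)]; exact hC
    exact pow_pos (by linarith) N
  refine ⟨?_, hpos⟩
  have hx : Tendsto (fun ρ : ℝ => 2 * Real.sqrt (ε / (ρ * τ))) atTop
      (nhdsWithin 0 (Set.Ioi 0)) := by
    rw [tendsto_nhdsWithin_iff]
    constructor
    · have h0 : Tendsto (fun ρ : ℝ => ε / (ρ * τ)) atTop (nhds 0) := by
        refine Tendsto.div_atTop tendsto_const_nhds ?_
        exact Tendsto.atTop_mul_const hτ tendsto_id
      have := (Real.continuous_sqrt.tendsto 0).comp h0
      have h2 := this.const_mul (2:ℝ)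
      simpa using h2
    · filter_upwards [eventually_gt_atTop (0:ℝ)] with ρ hρ
      exact mul_pos two_pos (Real.sqrt_pos.mpr (div_pos hε (mul_pos hρ hτ)))
  have hmain : Tendsto
      (fun ρ : ℝ => 2 * Real.sqrt (ε / (ρ * τ)) * besselK 1 (2 * Real.sqrt (ε / (ρ * τ))))
      atTop (nhds 1) := xK1_tendsto.comp hx
  exact (tendsto_const_nhds.sub (hmain.div_const _)).pow N
end
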